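/- Suppose Spec_S R = C₁ ∪ C₂ with C₁ ∩ C₂ = ∅. The following statements are equivalent: (1) C₁ and C₂ are both closed with respect to the S-Zariski topology; (2) there exist f₁, f₂ ∈ R with C₁ = V_S(f₁), C₂ = V_S(f₂), f₁ + f₂ ∈ S, and f₁f₂ ∈ √[S]((0)); (3) C₁ and C₂ are both closed with respect to the S-flat topology. -/

import Mathlib

/-- An ideal `P` is `S`-prime if `P ∩ S = ∅` and there is `s ∈ S` such that
whenever `a * b ∈ P`, either `s * a ∈ P` or `s * b ∈ P`. -/
def IsSPrime {R : Type*} [CommRing R] (S : Set R) (P : Ideal R) : Prop :=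
  (P : Set R) ∩ S = ∅ ∧ ∃ s ∈ S, ∀ a b : R, a * b ∈ P → s * a ∈ P ∨ s * b ∈ P

/-- The `S`-prime spectrum `Spec_S R`: the set of all `S`-prime ideals of `R`. -/
def SSpec {R : Type*} [CommRing R] (S : Set R) : Type _ :=
  {P : Ideal R // IsSPrime S P}

/-- The `S`-variety of an ideal `I`:
`V_S(I) = {P ∈ Spec_S R | s • I ⊆ P for some s ∈ S}`. -/
def SVar {R : Type*} [CommRing R] (S : Set R) (I : Ideal R) : Set (SSpec S) :=
  {P | ∃ s ∈ S, ∀ x ∈ I, s * x ∈ P.1}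

/-- The `S`-radical of an ideal `I`:
`√[S](I) = {a ∈ R | s * a ^ n ∈ I for some s ∈ S, n ∈ ℕ}`. -/
def SRad {R : Type*} [CommRing R] (S : Set R) (I : Ideal R) : Set R :=
  {a | ∃ s ∈ S, ∃ n : ℕ, s * a ^ n ∈ I}

/-- The `S`-Zariski topology on `Spec_S R`: the closed sets are exactly the `V_S(I)`. -/
def sZariskiTop {R : Type*} [CommRing R] (S : Set R) : TopologicalSpace (SSpec S) :=
  TopologicalSpace.generateFrom {U | ∃ I : Ideal R, U = (SVar S I)ᶜ}

/-- The `S`-flat topology on `Spec_S R`: the coarsest topology in which every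
`V_S(f)`, `f ∈ R`, is open. -/
def sFlatTop {R : Type*} [CommRing R] (S : Set R) : TopologicalSpace (SSpec S) :=
  TopologicalSpace.generateFrom {U | ∃ f : R, U = SVar S (Ideal.span {f})}

/-- An ideal `I` is `S`-radically finite if `√[S](I) = √[S](J)` for some finitely
generated ideal `J`. -/
def SRadFinite {R : Type*} [CommRing R] (S : Set R) (I : Ideal R) : Prop :=
  ∃ J : Ideal R, J.FG ∧ SRad S I = SRad S J

namespace SAux

variable {R : Type*} [CommRing R] {S : Set R}

lemma pow_mem (hS1 : (1:R) ∈ S) (hSmul : ∀ s ∈ S, ∀ t ∈ S, s * t ∈ S)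
    {s : R} (hs : s ∈ S) (n : ℕ) : s ^ n ∈ S := by
  induction n with
  | zero => simpa using hS1
  | succ n ih => rw [pow_succ]; exact hSmul _ ih _ hs

lemma sdisj (P : SSpec S) : ∀ x ∈ S, x ∉ P.1 := by
  intro x hx hxP
  have := P.2.1
  rw [Set.eq_empty_iff_forall_notMem] at this
  exact this x ⟨hxP, hx⟩

lemma SVar_anti {I J : Ideal R} (h : I ≤ J) : SVar S J ⊆ SVar S I := by
  rintro P ⟨s, hs, hP⟩
  exact ⟨s, hs, fun x hx => hP x (h hx)⟩

lemma SVar_top : SVar S (⊤ : Ideal R) = ∅ := by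
  rw [Set.eq_empty_iff_forall_notMem]
  rintro P ⟨s, hs, hP⟩
  exact sdisj P s hs (by simpa using hP 1 trivial)

lemma SVar_bot (hS1 : (1:R) ∈ S) : SVar S (⊥ : Ideal R) = Set.univ := by
  ext P
  simp only [Set.mem_univ, iff_true]
  exact ⟨1, hS1, fun x hx => by
    rw [Ideal.mem_bot] at hx; rw [hx, mul_zero]; exact P.1.zero_mem⟩

lemma SVar_sup (hSmul : ∀ s ∈ S, ∀ t ∈ S, s * t ∈ S) (I J : Ideal R) :
    SVar S (I ⊔ J) = SVar S I ∩ SVar S J := by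
  ext P
  constructor
  · intro h
    exact ⟨SVar_anti le_sup_left h, SVar_anti le_sup_right h⟩
  · rintro ⟨⟨u, hu, hui⟩, ⟨v, hv, hvj⟩⟩
    refine ⟨u * v, hSmul _ hu _ hv, fun x hx => ?_⟩
    obtain ⟨y, hy, z, hz, rfl⟩ := Submodule.mem_sup.mp hx
    have h1 : u * v * y = v * (u * y) := by ring
    have h2 : u * v * z = u * (v * z) := by ring
    rw [mul_add, h1, h2]
    exact P.1.add_mem (P.1.mul_mem_left _ (hui y hy)) (P.1.mul_mem_left _ (hvj z hz))

lemma SVar_mul (hSmul : ∀ s ∈ S, ∀ t ∈ S, s * t ∈ S) (I J : Ideal R) :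
    SVar S (I * J) = SVar S I ∪ SVar S J := by
  ext P
  constructor
  · rintro ⟨s, hs, hP⟩
    obtain ⟨_, t, ht, hprime⟩ := P.2
    by_cases hJ : ∀ y ∈ J, (t * s) * y ∈ P.1
    · exact Or.inr ⟨t * s, hSmul _ ht _ hs, hJ⟩
    · push_neg at hJ
      obtain ⟨y, hy, hyP⟩ := hJ
      left
      refine ⟨t * s, hSmul _ ht _ hs, fun x hx => ?_⟩
      have hxy : (s * x) * y ∈ P.1 := by
        have : s * (x * y) ∈ P.1 := hP _ (Ideal.mul_mem_mul hx hy)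
        rwa [← mul_assoc] at this
      rcases hprime _ _ hxy with h | h
      · rwa [← mul_assoc] at h
      · exact absurd (by rw [mul_comm t s, mul_assoc]; exact P.1.mul_mem_left s h) hyP
  · rintro (h | h)
    · exact SVar_anti Ideal.mul_le_left h
    · exact SVar_anti Ideal.mul_le_right h

lemma SVar_finset_sup (hS1 : (1:R) ∈ S) (hSmul : ∀ s ∈ S, ∀ t ∈ S, s * t ∈ S)
    {ι : Type*} (t : Finset ι) (I : ι → Ideal R) :
    SVar S (t.sup I) = ⋂ i ∈ t, SVar S (I i) := by
  classical
  induction t using Finset.induction with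
  | empty => simp [SVar_bot hS1]
  | insert _ _ hx ih =>
      rw [Finset.sup_insert, SVar_sup hSmul, ih]
      simp

lemma SVar_finset_prod (hS1 : (1:R) ∈ S) (hSmul : ∀ s ∈ S, ∀ t ∈ S, s * t ∈ S)
    {ι : Type*} (t : Finset ι) (I : ι → Ideal R) :
    SVar S (∏ i ∈ t, I i) = ⋃ i ∈ t, SVar S (I i) := by
  classical
  induction t using Finset.induction with
  | empty => simp [Ideal.one_eq_top, SVar_top]
  | insert _ _ hx ih =>
      rw [Finset.prod_insert hx, SVar_mul hSmul, ih]
      simp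

def toSubmonoid (hS1 : (1:R) ∈ S) (hSmul : ∀ s ∈ S, ∀ t ∈ S, s * t ∈ S) : Submonoid R where
  carrier := S
  one_mem' := hS1
  mul_mem' := fun ha hb => hSmul _ ha _ hb

lemma exists_prime_disjoint (hS1 : (1:R) ∈ S) (hSmul : ∀ s ∈ S, ∀ t ∈ S, s * t ∈ S)
    (I : Ideal R) (h : (I : Set R) ∩ S = ∅) :
    ∃ Q : Ideal R, Q.IsPrime ∧ I ≤ Q ∧ (Q : Set R) ∩ S = ∅ := by
  obtain ⟨p, hp, hIp, hdisj⟩ := Ideal.exists_le_prime_disjoint I (toSubmonoid hS1 hSmul)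
    (Set.disjoint_iff_inter_eq_empty.mpr h)
  exact ⟨p, hp, hIp, Set.disjoint_iff_inter_eq_empty.mp hdisj⟩

lemma isSPrime_of_prime (hS1 : (1:R) ∈ S) {Q : Ideal R} (hQ : Q.IsPrime)
    (h : (Q : Set R) ∩ S = ∅) : IsSPrime S Q := by
  refine ⟨h, 1, hS1, fun a b hab => ?_⟩
  rcases hQ.mem_or_mem hab with h' | h'
  · exact Or.inl (by rwa [one_mul])
  · exact Or.inr (by rwa [one_mul])

lemma SVar_nonempty (hS1 : (1:R) ∈ S) (hSmul : ∀ s ∈ S, ∀ t ∈ S, s * t ∈ S)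
    (I : Ideal R) (h : (I : Set R) ∩ S = ∅) : (SVar S I).Nonempty := by
  obtain ⟨Q, hQ, hIQ, hdisj⟩ := exists_prime_disjoint hS1 hSmul I h
  exact ⟨⟨Q, isSPrime_of_prime hS1 hQ hdisj⟩, 1, hS1,
    fun x hx => by rw [one_mul]; exact hIQ hx⟩

lemma mem_SRad_zero (hS1 : (1:R) ∈ S) (hSmul : ∀ s ∈ S, ∀ t ∈ S, s * t ∈ S)
    (x : R) (h : ∀ Q : Ideal R, Q.IsPrime → (Q : Set R) ∩ S = ∅ → x ∈ Q) :
    x ∈ SRad S (0 : Ideal R) := by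
  by_contra hx
  have hT : ∀ s ∈ S, ∀ n : ℕ, s * x ^ n ≠ 0 := by
    intro s hs n h0
    exact hx ⟨s, hs, n, by simp [h0]⟩
  set T : Submonoid R :=
    { carrier := {r | ∃ s ∈ S, ∃ n : ℕ, r = s * x ^ n}
      one_mem' := ⟨1, hS1, 0, by ring⟩
      mul_mem' := by
        rintro a b ⟨s, hs, m, rfl⟩ ⟨t, ht, n, rfl⟩
        exact ⟨s * t, hSmul _ hs _ ht, m + n, by ring⟩ } with hTdef
  have hdisjT : Disjoint ((⊥ : Ideal R) : Set R) (T : Set R) := by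
    rw [Set.disjoint_left]
    rintro r hr ⟨s, hs, n, rfl⟩
    exact hT s hs n (by simpa using hr)
  obtain ⟨p, hp, -, hdisj⟩ := Ideal.exists_le_prime_disjoint ⊥ T hdisjT
  have hpS : (p : Set R) ∩ S = ∅ := by
    rw [Set.eq_empty_iff_forall_notMem]
    rintro r ⟨hrp, hrS⟩
    exact Set.disjoint_left.mp hdisj hrp ⟨r, hrS, 0, by ring⟩
  have hxp : x ∈ p := h p hp hpS
  exact Set.disjoint_left.mp hdisj hxp ⟨1, hS1, 1, by ring⟩

end SAux


namespace SAux

variable {R : Type*} [CommRing R] {S : Set R}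

/-- From an S-prime `P`, produce a prime `Q` disjoint from `S` such that
membership in `SVar` relates to containment in `Q`. -/
lemma exists_prime_of_sprime (hS1 : (1:R) ∈ S) (hSmul : ∀ s ∈ S, ∀ t ∈ S, s * t ∈ S)
    (P : SSpec S) :
    ∃ Q : Ideal R, Q.IsPrime ∧ (Q : Set R) ∩ S = ∅ ∧
      (∀ I : Ideal R, P ∈ SVar S I → I ≤ Q) ∧
      (∀ E : Finset R, Ideal.span (E : Set R) ≤ Q → P ∈ SVar S (Ideal.span (E : Set R))) := by
  obtain ⟨hPd, t, htS, hprime⟩ := P.2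
  have hnotP : ∀ x ∈ S, x ∉ P.1 := sdisj P
  set Q : Ideal R :=
    { carrier := {a | ∃ n : ℕ, t ^ n * a ∈ P.1}
      zero_mem' := ⟨0, by simpa using P.1.zero_mem⟩
      add_mem' := by
        rintro a b ⟨m, hm⟩ ⟨n, hn⟩
        refine ⟨m + n, ?_⟩
        have : t ^ (m + n) * (a + b) = t ^ n * (t ^ m * a) + t ^ m * (t ^ n * b) := by ring
        rw [this]
        exact P.1.add_mem (P.1.mul_mem_left _ hm) (P.1.mul_mem_left _ hn)
      smul_mem' := by
        rintro c a ⟨n, hn⟩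
        refine ⟨n, ?_⟩
        have : t ^ n * (c • a) = c * (t ^ n * a) := by simp [smul_eq_mul]; ring
        rw [this]
        exact P.1.mul_mem_left _ hn } with hQdef
  have hmemQ : ∀ a : R, a ∈ Q ↔ ∃ n : ℕ, t ^ n * a ∈ P.1 := fun a => Iff.rfl
  have hQS : (Q : Set R) ∩ S = ∅ := by
    rw [Set.eq_empty_iff_forall_notMem]
    rintro r ⟨hrQ, hrS⟩
    obtain ⟨n, hn⟩ := (hmemQ r).mp hrQ
    exact hnotP _ (hSmul _ (pow_mem hS1 hSmul htS n) _ hrS) hn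
  have hQprime : Q.IsPrime := by
    constructor
    · intro htop
      have h1 : (1 : R) ∈ Q := htop ▸ Submodule.mem_top
      obtain ⟨n, hn⟩ := (hmemQ 1).mp h1
      rw [mul_one] at hn
      exact hnotP _ (pow_mem hS1 hSmul htS n) hn
    · intro a b hab
      obtain ⟨n, hn⟩ := (hmemQ _).mp hab
      have : (t ^ n * a) * b ∈ P.1 := by rwa [mul_assoc]
      rcases hprime _ _ this with h | h
      · exact Or.inl ⟨n + 1, by rw [pow_succ, mul_comm (t^n) t, mul_assoc]; exact h⟩
      · exact Or.inr ⟨1, by rwa [pow_one]⟩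
  refine ⟨Q, hQprime, hQS, ?_, ?_⟩
  · rintro I ⟨s, hs, hsI⟩ x hx
    have hxs : x * s ∈ P.1 := by rw [mul_comm]; exact hsI x hx
    rcases hprime _ _ hxs with h | h
    · exact ⟨1, by rwa [pow_one]⟩
    · exact absurd h (hnotP _ (hSmul _ htS _ hs))
  · intro E hE
    classical
    have key : ∀ F : Finset R, (∀ e ∈ F, e ∈ Q) → ∃ N : ℕ, ∀ e ∈ F, t ^ N * e ∈ P.1 := by
      intro F
      induction F using Finset.induction with
      | empty => exact fun _ => ⟨0, by simp⟩
      | @insert a F ha ih =>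
          intro hmem
          obtain ⟨N, hN⟩ := ih (fun e he => hmem e (Finset.mem_insert_of_mem he))
          obtain ⟨n, hn⟩ := (hmemQ a).mp (hmem a (Finset.mem_insert_self a F))
          refine ⟨N + n, fun e he => ?_⟩
          rcases Finset.mem_insert.mp he with rfl | he
          · have : t ^ (N + n) * e = t ^ N * (t ^ n * e) := by ring
            rw [this]; exact P.1.mul_mem_left _ hn
          · have : t ^ (N + n) * e = t ^ n * (t ^ N * e) := by ring
            rw [this]; exact P.1.mul_mem_left _ (hN e he)
    obtain ⟨N, hN⟩ := key E (fun e he => hE (Ideal.subset_span he))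
    refine ⟨t ^ N, pow_mem hS1 hSmul htS N, ?_⟩
    intro x hx
    -- x ∈ span E ⇒ t^N * x ∈ P.1
    have hsub : Ideal.span (E : Set R) ≤
        { carrier := {a | t ^ N * a ∈ P.1}
          zero_mem' := by simpa using P.1.zero_mem
          add_mem' := by
            intro a b ha hb
            simp only [Set.mem_setOf_eq, mul_add] at *
            exact P.1.add_mem ha hb
          smul_mem' := by
            intro c a ha
            simp only [Set.mem_setOf_eq, smul_eq_mul] at *
            have : t ^ N * (c * a) = c * (t ^ N * a) := by ring
            rw [this]; exact P.1.mul_mem_left _ ha } := by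
      rw [Ideal.span_le]
      intro e he
      exact hN e he
    exact hsub hx

end SAux

namespace SAux

variable {R : Type*} [CommRing R] {S : Set R}

lemma zariski_open_rep (hS1 : (1:R) ∈ S) (hSmul : ∀ s ∈ S, ∀ t ∈ S, s * t ∈ S)
    {U : Set (SSpec S)}
    (hU : TopologicalSpace.GenerateOpen {U | ∃ I : Ideal R, U = (SVar S I)ᶜ} U) :
    ∃ F : Set (Ideal R), Uᶜ = ⋂ I ∈ F, SVar S I := by
  induction hU with
  | basic V hV =>
      obtain ⟨I, rfl⟩ := hV
      exact ⟨{I}, by simp⟩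
  | univ => exact ⟨{⊤}, by simp [SVar_top]⟩
  | inter U V hU hV ihU ihV =>
      obtain ⟨F, hF⟩ := ihU
      obtain ⟨G, hG⟩ := ihV
      refine ⟨Set.image2 (· * ·) F G, ?_⟩
      rw [Set.compl_inter, hF, hG]
      ext P
      simp only [Set.mem_union, Set.mem_iInter, Set.mem_image2]
      constructor
      · rintro (h | h)
        · rintro L ⟨I, hI, J, hJ, rfl⟩
          rw [SVar_mul hSmul]
          exact Or.inl (h I hI)
        · rintro L ⟨I, hI, J, hJ, rfl⟩
          rw [SVar_mul hSmul]
          exact Or.inr (h J hJ)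
      · intro h
        by_cases hF' : ∀ I ∈ F, P ∈ SVar S I
        · exact Or.inl hF'
        · push_neg at hF'
          obtain ⟨I₀, hI₀, hPI₀⟩ := hF'
          right
          intro J hJ
          have := h (I₀ * J) ⟨I₀, hI₀, J, hJ, rfl⟩
          rw [SVar_mul hSmul] at this
          exact this.resolve_left hPI₀
  | sUnion 𝒮 h ih =>
      choose F hF using ih
      refine ⟨⋃ (U : Set (SSpec S)) (h : U ∈ 𝒮), F U h, ?_⟩
      ext P
      simp only [Set.mem_compl_iff, Set.mem_sUnion, Set.mem_iInter, Set.mem_iUnion]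
      constructor
      · intro hP I hI
        obtain ⟨U, hU𝒮, hIF⟩ := by simpa using hI
        have : P ∈ Uᶜ := fun hPU => hP ⟨U, hU𝒮, hPU⟩
        rw [hF U hU𝒮] at this
        exact Set.mem_iInter₂.mp this I hIF
      · intro hP
        rintro ⟨U, hU𝒮, hPU⟩
        have : P ∈ Uᶜ := by
          rw [hF U hU𝒮]
          refine Set.mem_iInter₂.mpr fun I hI => hP I ?_
          exact ⟨U, hU𝒮, hI⟩
        exact this hPU

lemma flat_open_basis (hS1 : (1:R) ∈ S) (hSmul : ∀ s ∈ S, ∀ t ∈ S, s * t ∈ S)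
    {U : Set (SSpec S)}
    (hU : TopologicalSpace.GenerateOpen {U | ∃ f : R, U = SVar S (Ideal.span {f})} U) :
    ∀ P ∈ U, ∃ E : Finset R,
      P ∈ SVar S (Ideal.span (E : Set R)) ∧ SVar S (Ideal.span (E : Set R)) ⊆ U := by
  induction hU with
  | basic V hV =>
      obtain ⟨f, rfl⟩ := hV
      intro P hP
      exact ⟨{f}, by simpa using hP, by simp⟩
  | univ =>
      intro P _
      refine ⟨∅, ?_, fun _ _ => trivial⟩
      simp only [Finset.coe_empty, Ideal.span_empty]
      rw [SVar_bot hS1]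
      trivial
  | inter U V hU hV ihU ihV =>
      rintro P ⟨hPU, hPV⟩
      obtain ⟨E₁, hE₁, hE₁U⟩ := ihU P hPU
      obtain ⟨E₂, hE₂, hE₂V⟩ := ihV P hPV
      classical
      refine ⟨E₁ ∪ E₂, ?_, ?_⟩
      · have : Ideal.span ((E₁ ∪ E₂ : Finset R) : Set R) =
            Ideal.span (E₁ : Set R) ⊔ Ideal.span (E₂ : Set R) := by
          rw [Finset.coe_union, Ideal.span_union]
        rw [this, SVar_sup hSmul]
        exact ⟨hE₁, hE₂⟩
      · have : Ideal.span ((E₁ ∪ E₂ : Finset R) : Set R) =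
            Ideal.span (E₁ : Set R) ⊔ Ideal.span (E₂ : Set R) := by
          rw [Finset.coe_union, Ideal.span_union]
        rw [this, SVar_sup hSmul]
        exact fun Q hQ => ⟨hE₁U hQ.1, hE₂V hQ.2⟩
  | sUnion 𝒮 h ih =>
      rintro P ⟨U, hU𝒮, hPU⟩
      obtain ⟨E, hE, hEU⟩ := ih U hU𝒮 P hPU
      exact ⟨E, hE, hEU.trans (Set.subset_sUnion_of_mem hU𝒮)⟩

open Filter in
lemma flat_compact (hS1 : (1:R) ∈ S) (hSmul : ∀ s ∈ S, ∀ t ∈ S, s * t ∈ S)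
    {ι : Type*} (E : ι → Finset R)
    (hcov : ∀ Q : Ideal R, Q.IsPrime → (Q : Set R) ∩ S = ∅ →
      ∃ i, Ideal.span ((E i : Set R)) ≤ Q) :
    ∃ t : Finset ι, ∀ Q : Ideal R, Q.IsPrime → (Q : Set R) ∩ S = ∅ →
      ∃ i ∈ t, Ideal.span ((E i : Set R)) ≤ Q := by
  classical
  by_contra hcon
  push_neg at hcon
  choose q hq1 hq2 hq3 using hcon
  -- hq3 : ∀ t, ∀ i ∈ t, ¬ span (E i) ≤ q t
  let U : Ultrafilter (Finset ι) := Ultrafilter.of atTop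
  have hUat : (U : Filter (Finset ι)) ≤ atTop := Ultrafilter.of_le _
  set Q : Ideal R :=
    { carrier := {x | {t | x ∈ q t} ∈ (U : Filter (Finset ι))}
      zero_mem' := by
        have : {t : Finset ι | (0:R) ∈ q t} = Set.univ :=
          Set.eq_univ_of_forall fun t => (q t).zero_mem
        rw [Set.mem_setOf_eq, this]
        exact Filter.univ_mem
      add_mem' := by
        intro a b ha hb
        refine Filter.mem_of_superset (Filter.inter_mem ha hb) ?_
        rintro t ⟨h1, h2⟩
        exact (q t).add_mem h1 h2
      smul_mem' := by
        intro c a ha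
        refine Filter.mem_of_superset ha ?_
        intro t h1
        exact (q t).smul_mem c h1 } with hQdef
  have hmemQ : ∀ a : R, a ∈ Q ↔ {t | a ∈ q t} ∈ (U : Filter (Finset ι)) := fun a => Iff.rfl
  have hQS : (Q : Set R) ∩ S = ∅ := by
    rw [Set.eq_empty_iff_forall_notMem]
    rintro r ⟨hrQ, hrS⟩
    have hempty : {t : Finset ι | r ∈ q t} = ∅ := by
      rw [Set.eq_empty_iff_forall_notMem]
      intro t hrt
      have := hq2 t
      rw [Set.eq_empty_iff_forall_notMem] at this
      exact this r ⟨hrt, hrS⟩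
    have hmem : {t : Finset ι | r ∈ q t} ∈ (U : Filter (Finset ι)) := hrQ
    rw [hempty] at hmem
    exact Filter.empty_notMem _ hmem
  have hQprime : Q.IsPrime := by
    constructor
    · intro htop
      have h1 : (1 : R) ∈ Q := htop ▸ Submodule.mem_top
      have hempty : {t : Finset ι | (1:R) ∈ q t} = ∅ := by
        rw [Set.eq_empty_iff_forall_notMem]
        intro t h1t
        exact (hq1 t).ne_top ((Ideal.eq_top_iff_one _).mpr h1t)
      rw [hmemQ, hempty] at h1
      exact Filter.empty_notMem _ h1
    · intro a b hab
      rw [hmemQ] at hab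
      have hsub : {t : Finset ι | a * b ∈ q t} ⊆ {t | a ∈ q t} ∪ {t | b ∈ q t} :=
        fun t ht => (hq1 t).mem_or_mem ht
      have : {t : Finset ι | a ∈ q t} ∪ {t | b ∈ q t} ∈ (U : Filter (Finset ι)) :=
        Filter.mem_of_superset hab hsub
      rcases Ultrafilter.union_mem_iff.mp (Ultrafilter.mem_coe.mp this) with h | h
      · exact Or.inl h
      · exact Or.inr h
  obtain ⟨i, hi⟩ := hcov Q hQprime hQS
  have hA : ∀ e ∈ E i, {t : Finset ι | e ∈ q t} ∈ (U : Filter (Finset ι)) := by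
    intro e he
    exact (hmemQ e).mp (hi (Ideal.subset_span he))
  have hB : {t : Finset ι | i ∈ t} ∈ (U : Filter (Finset ι)) := by
    apply hUat
    rw [Filter.mem_atTop_sets]
    exact ⟨{i}, fun b hb => Finset.singleton_subset_iff.mp hb⟩
  have hAB : ((⋂ e ∈ E i, {t : Finset ι | e ∈ q t}) ∩ {t | i ∈ t})
      ∈ (U : Filter (Finset ι)) := by
    refine Filter.inter_mem ?_ hB
    exact (Filter.biInter_finset_mem (E i)).mpr hA
  obtain ⟨t, ht⟩ := Filter.nonempty_of_mem hAB
  obtain ⟨ht1, ht2⟩ := ht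
  refine hq3 t i ht2 ?_
  rw [Ideal.span_le]
  intro e he
  exact Set.mem_iInter₂.mp ht1 e he

end SAux


namespace SAux

variable {R : Type*} [CommRing R] {S : Set R}

lemma compl_eq {C₁ C₂ : Set (SSpec S)} (hunion : C₁ ∪ C₂ = Set.univ)
    (hdisj : C₁ ∩ C₂ = ∅) : C₂ = C₁ᶜ := by
  ext P
  constructor
  · intro h2 h1
    have h : P ∈ C₁ ∩ C₂ := ⟨h1, h2⟩
    rw [hdisj] at h
    exact h
  · intro h1
    have h : P ∈ C₁ ∪ C₂ := hunion ▸ Set.mem_univ P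
    exact h.resolve_left h1

lemma tail (hS1 : (1:R) ∈ S) (hSmul : ∀ s ∈ S, ∀ t ∈ S, s * t ∈ S)
    {C₁ C₂ : Set (SSpec S)} (hunion : C₁ ∪ C₂ = Set.univ) (hdisj : C₁ ∩ C₂ = ∅)
    {J K : Ideal R} (h1 : C₁ ⊆ SVar S J) (h2 : C₂ ⊆ SVar S K)
    {a b : R} (ha : a ∈ J) (hb : b ∈ K) (hs : a + b ∈ S) :
    ∃ f₁ f₂ : R, C₁ = SVar S (Ideal.span {f₁}) ∧ C₂ = SVar S (Ideal.span {f₂}) ∧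
      f₁ + f₂ ∈ S ∧ f₁ * f₂ ∈ SRad S (0 : Ideal R) := by
  have hdisj' : ∀ P : SSpec S, P ∈ C₁ → P ∈ C₂ → False := by
    intro P hP1 hP2
    have h : P ∈ C₁ ∩ C₂ := ⟨hP1, hP2⟩
    rw [hdisj] at h
    exact h
  -- V_S(b) misses C₁
  have hVb : ∀ P ∈ C₁, P ∉ SVar S (Ideal.span {b}) := by
    rintro P hP ⟨t, ht, htb⟩
    obtain ⟨u, hu, huJ⟩ := h1 hP
    have h1' : u * a ∈ P.1 := huJ a ha
    have h2' : t * b ∈ P.1 := htb b (Ideal.mem_span_singleton_self b)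
    have hsum : (t * u) * (a + b) ∈ P.1 := by
      have : (t * u) * (a + b) = t * (u * a) + u * (t * b) := by ring
      rw [this]
      exact P.1.add_mem (P.1.mul_mem_left _ h1') (P.1.mul_mem_left _ h2')
    exact sdisj P _ (hSmul _ (hSmul _ ht _ hu) _ hs) hsum
  have hVa : ∀ P ∈ C₂, P ∉ SVar S (Ideal.span {a}) := by
    rintro P hP ⟨t, ht, hta⟩
    obtain ⟨u, hu, huK⟩ := h2 hP
    have h1' : u * b ∈ P.1 := huK b hb
    have h2' : t * a ∈ P.1 := hta a (Ideal.mem_span_singleton_self a)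
    have hsum : (t * u) * (a + b) ∈ P.1 := by
      have : (t * u) * (a + b) = u * (t * a) + t * (u * b) := by ring
      rw [this]
      exact P.1.add_mem (P.1.mul_mem_left _ h2') (P.1.mul_mem_left _ h1')
    exact sdisj P _ (hSmul _ (hSmul _ ht _ hu) _ hs) hsum
  have hC1 : C₁ = SVar S (Ideal.span {a}) := by
    apply Set.Subset.antisymm
    · exact fun P hP => SVar_anti ((Ideal.span_singleton_le_iff_mem _).mpr ha) (h1 hP)
    · intro P hP
      have hPu : P ∈ C₁ ∪ C₂ := hunion ▸ Set.mem_univ P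
      rcases hPu with h | h
      · exact h
      · exact absurd hP (hVa P h)
  have hC2 : C₂ = SVar S (Ideal.span {b}) := by
    apply Set.Subset.antisymm
    · exact fun P hP => SVar_anti ((Ideal.span_singleton_le_iff_mem _).mpr hb) (h2 hP)
    · intro P hP
      have hPu : P ∈ C₁ ∪ C₂ := hunion ▸ Set.mem_univ P
      rcases hPu with h | h
      · exact absurd hP (hVb P h)
      · exact h
  refine ⟨a, b, hC1, hC2, hs, ?_⟩
  apply mem_SRad_zero hS1 hSmul
  intro Q hQ hQS
  set PQ : SSpec S := ⟨Q, isSPrime_of_prime hS1 hQ hQS⟩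
  have hQnot : ∀ x ∈ S, x ∉ Q := by
    intro x hx hxQ
    rw [Set.eq_empty_iff_forall_notMem] at hQS
    exact hQS x ⟨hxQ, hx⟩
  have hPu : PQ ∈ C₁ ∪ C₂ := hunion ▸ Set.mem_univ PQ
  rcases hPu with h | h
  · rw [hC1] at h
    obtain ⟨u, hu, huQ⟩ := h
    have hua : u * a ∈ Q := huQ a (Ideal.mem_span_singleton_self a)
    have haQ : a ∈ Q := (hQ.mem_or_mem hua).resolve_left (hQnot u hu)
    exact Q.mul_mem_right b haQ
  · rw [hC2] at h
    obtain ⟨u, hu, huQ⟩ := h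
    have hub : u * b ∈ Q := huQ b (Ideal.mem_span_singleton_self b)
    have hbQ : b ∈ Q := (hQ.mem_or_mem hub).resolve_left (hQnot u hu)
    exact Q.mul_mem_left a hbQ

end SAux


namespace SAux

variable {R : Type*} [CommRing R] {S : Set R}

lemma zariski_closed_rep (hS1 : (1:R) ∈ S) (hSmul : ∀ s ∈ S, ∀ t ∈ S, s * t ∈ S)
    {C : Set (SSpec S)} (hC : @IsClosed (SSpec S) (sZariskiTop S) C) :
    ∃ F : Set (Ideal R), C = ⋂ I ∈ F, SVar S I := by
  have h : TopologicalSpace.GenerateOpen {U | ∃ I : Ideal R, U = (SVar S I)ᶜ} Cᶜ :=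
    hC.isOpen_compl
  obtain ⟨F, hF⟩ := zariski_open_rep hS1 hSmul h
  rw [compl_compl] at hF
  exact ⟨F, hF⟩

end SAux

open SAux in
/-- For a partition `Spec_S R = C₁ ∪ C₂`, `C₁ ∩ C₂ = ∅`, TFAE:
(1) `C₁, C₂` are `S`-Zariski closed;
(2) `Cᵢ = V_S(fᵢ)` with `f₁ + f₂ ∈ S` and `f₁f₂ ∈ √[S](0)`;
(3) `C₁, C₂` are `S`-flat closed. -/
theorem sSpec_partition_tfae {R : Type*} [CommRing R] [Nontrivial R] (S : Set R)
    (hS0 : (0 : R) ∉ S) (hS1 : (1 : R) ∈ S) (hSmul : ∀ s ∈ S, ∀ t ∈ S, s * t ∈ S)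
    (C₁ C₂ : Set (SSpec S)) (hunion : C₁ ∪ C₂ = Set.univ) (hdisj : C₁ ∩ C₂ = ∅) :
    List.TFAE
      [@IsClosed (SSpec S) (sZariskiTop S) C₁ ∧ @IsClosed (SSpec S) (sZariskiTop S) C₂,
       ∃ f₁ f₂ : R, C₁ = SVar S (Ideal.span {f₁}) ∧ C₂ = SVar S (Ideal.span {f₂}) ∧
         f₁ + f₂ ∈ S ∧ f₁ * f₂ ∈ SRad S (0 : Ideal R),
       @IsClosed (SSpec S) (sFlatTop S) C₁ ∧ @IsClosed (SSpec S) (sFlatTop S) C₂] := by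
  have hcompl : C₂ = C₁ᶜ := compl_eq hunion hdisj
  tfae_have 2 → 1 := by
    rintro ⟨f₁, f₂, h1, h2, -, -⟩
    letI := sZariskiTop S
    have hcl : ∀ I : Ideal R, IsClosed (SVar S I) := fun I =>
      ⟨TopologicalSpace.GenerateOpen.basic _ ⟨I, rfl⟩⟩
    exact ⟨h1 ▸ hcl (Ideal.span {f₁}), h2 ▸ hcl (Ideal.span {f₂})⟩
  tfae_have 2 → 3 := by
    rintro ⟨f₁, f₂, h1, h2, -, -⟩
    letI := sFlatTop S
    have hop : ∀ f : R, IsOpen (SVar S (Ideal.span {f})) := fun f =>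
      TopologicalSpace.GenerateOpen.basic _ ⟨f, rfl⟩
    constructor
    · refine ⟨?_⟩
      have ht : C₁ᶜ = SVar S (Ideal.span {f₂}) := by rw [← hcompl, h2]
      rw [ht]
      exact hop f₂
    · refine ⟨?_⟩
      have ht : C₂ᶜ = SVar S (Ideal.span {f₁}) := by rw [hcompl, compl_compl, h1]
      rw [ht]
      exact hop f₁
  tfae_have 1 → 2 := by
    rintro ⟨hZ1, hZ2⟩
    obtain ⟨F, hF⟩ := zariski_closed_rep hS1 hSmul hZ1
    obtain ⟨G, hG⟩ := zariski_closed_rep hS1 hSmul hZ2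
    have hmeet : ¬ ((sSup (F ∪ G) : Ideal R) : Set R) ∩ S = ∅ := by
      intro hempty
      obtain ⟨P, hP⟩ := SVar_nonempty hS1 hSmul _ hempty
      have hP1 : P ∈ C₁ := by
        rw [hF]
        exact Set.mem_iInter₂.mpr fun I hI => SVar_anti (le_sSup (Or.inl hI)) hP
      have hP2 : P ∈ C₂ := by
        rw [hG]
        exact Set.mem_iInter₂.mpr fun I hI => SVar_anti (le_sSup (Or.inr hI)) hP
      have h : P ∈ C₁ ∩ C₂ := ⟨hP1, hP2⟩
      rw [hdisj] at h
      exact h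
    obtain ⟨s, hsI, hsS⟩ := Set.nonempty_iff_ne_empty.mpr hmeet
    obtain ⟨t, htFG, hst⟩ := Submodule.mem_sSup_iff_exists_finset.mp hsI
    classical
    have hst' : s ∈ t.sup id := by
      rw [Finset.sup_eq_iSup]
      exact hst
    set tF := t.filter (fun I => I ∈ F) with htF
    set tG := t.filter (fun I => I ∉ F) with htG
    have hsup : t.sup id ≤ tF.sup id ⊔ tG.sup id := by
      refine Finset.sup_le fun I hI => ?_
      by_cases hIF : I ∈ F
      · exact le_trans (Finset.le_sup (Finset.mem_filter.mpr ⟨hI, hIF⟩)) le_sup_left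
      · exact le_trans (Finset.le_sup (Finset.mem_filter.mpr ⟨hI, hIF⟩)) le_sup_right
    obtain ⟨a, haJ, b, hbK, hab⟩ := Submodule.mem_sup.mp (hsup hst')
    have h1 : C₁ ⊆ SVar S (tF.sup id) := by
      intro P hP
      rw [SVar_finset_sup hS1 hSmul]
      refine Set.mem_iInter₂.mpr fun I hI => ?_
      exact Set.mem_iInter₂.mp (hF ▸ hP) I (Finset.mem_filter.mp hI).2
    have h2 : C₂ ⊆ SVar S (tG.sup id) := by
      intro P hP
      rw [SVar_finset_sup hS1 hSmul]
      refine Set.mem_iInter₂.mpr fun I hI => ?_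
      have hmem := Finset.mem_filter.mp hI
      exact Set.mem_iInter₂.mp (hG ▸ hP) I ((htFG hmem.1).resolve_left hmem.2)
    exact tail hS1 hSmul hunion hdisj h1 h2 haJ hbK (hab.symm ▸ hsS)
  tfae_have 3 → 2 := by
    rintro ⟨hFl1, hFl2⟩
    have hC2c : C₂ᶜ = C₁ := by rw [hcompl, compl_compl]
    have ho1 : TopologicalSpace.GenerateOpen
        {U | ∃ f : R, U = SVar S (Ideal.span {f})} C₁ := by
      have h : TopologicalSpace.GenerateOpen
          {U | ∃ f : R, U = SVar S (Ideal.span {f})} C₂ᶜ := hFl2.isOpen_compl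
      rwa [hC2c] at h
    have ho2 : TopologicalSpace.GenerateOpen
        {U | ∃ f : R, U = SVar S (Ideal.span {f})} C₂ := by
      have h : TopologicalSpace.GenerateOpen
          {U | ∃ f : R, U = SVar S (Ideal.span {f})} C₁ᶜ := hFl1.isOpen_compl
      rwa [← hcompl] at h
    have hbasis : ∀ P : SSpec S, ∃ E : Finset R,
        P ∈ SVar S (Ideal.span (E : Set R)) ∧
        (SVar S (Ideal.span (E : Set R)) ⊆ C₁ ∨ SVar S (Ideal.span (E : Set R)) ⊆ C₂) := by
      intro P
      have hPu : P ∈ C₁ ∪ C₂ := hunion ▸ Set.mem_univ P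
      rcases hPu with hP | hP
      · obtain ⟨E, hE1, hE2⟩ := flat_open_basis hS1 hSmul ho1 P hP
        exact ⟨E, hE1, Or.inl hE2⟩
      · obtain ⟨E, hE1, hE2⟩ := flat_open_basis hS1 hSmul ho2 P hP
        exact ⟨E, hE1, Or.inr hE2⟩
    choose E hEmem hEside using hbasis
    have hcov : ∀ Q : Ideal R, Q.IsPrime → (Q : Set R) ∩ S = ∅ →
        ∃ P : SSpec S, Ideal.span ((E P : Set R)) ≤ Q := by
      intro Q hQ hQS
      set PQ : SSpec S := ⟨Q, isSPrime_of_prime hS1 hQ hQS⟩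
      refine ⟨PQ, ?_⟩
      obtain ⟨u, hu, huE⟩ := hEmem PQ
      intro x hx
      have hux : u * x ∈ Q := huE x hx
      have hunq : u ∉ Q := by
        intro huQ
        rw [Set.eq_empty_iff_forall_notMem] at hQS
        exact hQS u ⟨huQ, hu⟩
      exact (hQ.mem_or_mem hux).resolve_left hunq
    obtain ⟨t, ht⟩ := flat_compact hS1 hSmul E hcov
    have hcover : ∀ P : SSpec S, ∃ i ∈ t, P ∈ SVar S (Ideal.span ((E i : Set R))) := by
      intro P
      obtain ⟨Q, hQp, hQS, hQ1, hQ2⟩ := exists_prime_of_sprime hS1 hSmul P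
      obtain ⟨i, hit, hiQ⟩ := ht Q hQp hQS
      exact ⟨i, hit, hQ2 (E i) hiQ⟩
    classical
    set A := t.filter (fun i => SVar S (Ideal.span ((E i : Set R))) ⊆ C₁) with hA
    set B := t.filter (fun i => ¬ SVar S (Ideal.span ((E i : Set R))) ⊆ C₁) with hB
    have hJC : SVar S (∏ i ∈ A, Ideal.span ((E i : Set R))) ⊆ C₁ := by
      rw [SVar_finset_prod hS1 hSmul]
      exact Set.iUnion₂_subset fun i hi => (Finset.mem_filter.mp hi).2
    have hKC : SVar S (∏ i ∈ B, Ideal.span ((E i : Set R))) ⊆ C₂ := by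
      rw [SVar_finset_prod hS1 hSmul]
      refine Set.iUnion₂_subset fun i hi => ?_
      exact (hEside i).resolve_left (Finset.mem_filter.mp hi).2
    have h1 : C₁ ⊆ SVar S (∏ i ∈ A, Ideal.span ((E i : Set R))) := by
      intro P hP
      obtain ⟨i, hit, hPi⟩ := hcover P
      have hiA : i ∈ A := by
        refine Finset.mem_filter.mpr ⟨hit, ?_⟩
        rcases hEside i with h | h
        · exact h
        · exfalso
          have hm : P ∈ C₁ ∩ C₂ := ⟨hP, h hPi⟩
          rw [hdisj] at hm
          exact hm
      rw [SVar_finset_prod hS1 hSmul]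
      exact Set.mem_iUnion₂.mpr ⟨i, hiA, hPi⟩
    have h2 : C₂ ⊆ SVar S (∏ i ∈ B, Ideal.span ((E i : Set R))) := by
      intro P hP
      obtain ⟨i, hit, hPi⟩ := hcover P
      have hiB : i ∈ B := by
        refine Finset.mem_filter.mpr ⟨hit, ?_⟩
        intro hsub
        have hm : P ∈ C₁ ∩ C₂ := ⟨hsub hPi, hP⟩
        rw [hdisj] at hm
        exact hm
      rw [SVar_finset_prod hS1 hSmul]
      exact Set.mem_iUnion₂.mpr ⟨i, hiB, hPi⟩
    have hempty : SVar S ((∏ i ∈ A, Ideal.span ((E i : Set R))) ⊔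
        (∏ i ∈ B, Ideal.span ((E i : Set R)))) = ∅ := by
      rw [SVar_sup hSmul, Set.eq_empty_iff_forall_notMem]
      rintro P ⟨hPJ, hPK⟩
      have hm : P ∈ C₁ ∩ C₂ := ⟨hJC hPJ, hKC hPK⟩
      rw [hdisj] at hm
      exact hm
    have hmeet : ¬ (((∏ i ∈ A, Ideal.span ((E i : Set R))) ⊔
        (∏ i ∈ B, Ideal.span ((E i : Set R))) : Ideal R) : Set R) ∩ S = ∅ := by
      intro h
      obtain ⟨P, hP⟩ := SVar_nonempty hS1 hSmul _ h
      rw [hempty] at hP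
      exact hP
    obtain ⟨s, hsJK, hsS⟩ := Set.nonempty_iff_ne_empty.mpr hmeet
    obtain ⟨a, haJ, b, hbK, hab⟩ := Submodule.mem_sup.mp hsJK
    exact tail hS1 hSmul hunion hdisj h1 h2 haJ hbK (hab.symm ▸ hsS)
  tfae_finish
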